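/- Let 𝔽_q be the finite field with q elements. Then the number of polynomial permutations of the ring of dual numbers 𝔽_q[α] equals q! · (q−1)^q · q^q. -/
import Mathlib

open Polynomial TrivSqZeroExt

section Aux

set_option linter.unusedSectionVars false

variable {F : Type*} [Field F] [Fintype F]

/-- Taylor expansion on dual numbers. -/
lemma dn_eval_eq (f : Polynomial (DualNumber F)) (x : DualNumber F) :
    f.eval x = inl (f.eval (inl x.fst)).fst +
      inr ((f.eval (inl x.fst)).snd + x.snd * (f.derivative.eval (inl x.fst)).fst) := by
  obtain ⟨k, hk⟩ := f.binomExpansion (inl x.fst) (inr x.snd)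
  rw [inl_fst_add_inr_snd_eq] at hk
  rw [hk]
  ext
  · simp [TrivSqZeroExt.fst_add, TrivSqZeroExt.fst_mul]
  · simp [TrivSqZeroExt.snd_add, TrivSqZeroExt.snd_mul, mul_comm]

/-- Hermite interpolation over a finite field. -/
lemma hermite (v w : F → F) :
    ∃ g : F[X], (∀ a, g.eval a = v a) ∧ (∀ a, g.derivative.eval a = w a) := by
  classical
  set L := Lagrange.interpolate Finset.univ id v with hL
  set M := Lagrange.interpolate Finset.univ id
    (fun a => L.derivative.eval a - w a) with hM
  have hinj : Set.InjOn (id : F → F) ↑(Finset.univ : Finset F) := Function.injective_id.injOn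
  have hLev : ∀ a : F, L.eval a = v a := fun a =>
    Lagrange.eval_interpolate_at_node _ hinj (Finset.mem_univ a)
  have hMev : ∀ a : F, M.eval a = L.derivative.eval a - w a := fun a =>
    Lagrange.eval_interpolate_at_node _ hinj (Finset.mem_univ a)
  refine ⟨L + (X ^ Fintype.card F - X) * M, ?_, ?_⟩
  · intro a
    simp [hLev a, FiniteField.pow_card]
  · intro a
    have hq : ((Fintype.card F : F)) = 0 := FiniteField.cast_card_eq_zero F
    simp only [derivative_add, derivative_mul, derivative_sub, derivative_X_pow, derivative_X,
      eval_add, eval_mul, eval_sub, eval_pow, eval_X, eval_one, eval_mul, eval_natCast, hq]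
    rw [hMev a]
    simp [FiniteField.pow_card]

/-- The standard-form map on dual numbers. -/
noncomputable def dnMap (P : Equiv.Perm F) (D : F → Fˣ) (H : F → F) :
    DualNumber F → DualNumber F :=
  fun x => inl (P x.fst) + inr (H x.fst + x.snd * (D x.fst : F))

lemma eval_aux (g h : F[X]) (a : F) :
    ((g.map (algebraMap F (DualNumber F)) +
        C (inr 1) * h.map (algebraMap F (DualNumber F))).eval (inl a)) =
      inl (g.eval a) + inr (h.eval a) := by
  have hg : (g.map (algebraMap F (DualNumber F))).eval (inl a) = inl (g.eval a) := by
    rw [← algebraMap_eq_inl, eval_map_algebraMap, aeval_algebraMap_apply]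
    simp
  have hh : (h.map (algebraMap F (DualNumber F))).eval (inl a) = inl (h.eval a) := by
    rw [← algebraMap_eq_inl, eval_map_algebraMap, aeval_algebraMap_apply]
    simp
  rw [eval_add, eval_mul, eval_C, hg, hh]
  ext <;> simp

lemma dnMap_isPoly (P : Equiv.Perm F) (D : F → Fˣ) (H : F → F) :
    ∃ f : Polynomial (DualNumber F), ∀ x, dnMap P D H x = f.eval x := by
  classical
  obtain ⟨g, hg, hg'⟩ := hermite (fun a => (P a : F)) (fun a => (D a : F))
  obtain ⟨h, hh, -⟩ := hermite H 0
  refine ⟨g.map (algebraMap F (DualNumber F)) +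
    C (inr 1) * h.map (algebraMap F (DualNumber F)), fun x => ?_⟩
  rw [dn_eval_eq, eval_aux]
  have hder : derivative (g.map (algebraMap F (DualNumber F)) +
      C (inr 1) * h.map (algebraMap F (DualNumber F))) =
      (derivative g).map (algebraMap F (DualNumber F)) +
        C (inr 1) * (derivative h).map (algebraMap F (DualNumber F)) := by
    rw [derivative_add, derivative_C_mul, derivative_map, derivative_map]
  rw [hder, eval_aux]
  ext
  · simp [dnMap, hg]
  · simp [dnMap, hg, hg', hh]

lemma dnMap_bijective (P : Equiv.Perm F) (D : F → Fˣ) (H : F → F) :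
    Function.Bijective (dnMap P D H) := by
  constructor
  · intro x y hxy
    have h1 : P x.fst = P y.fst := by
      have := congrArg TrivSqZeroExt.fst hxy
      simpa [dnMap] using this
    have h2 : x.fst = y.fst := P.injective h1
    have h3 : H x.fst + x.snd * (D x.fst : F) = H y.fst + y.snd * (D y.fst : F) := by
      have := congrArg TrivSqZeroExt.snd hxy
      simpa [dnMap] using this
    rw [h2] at h3
    have h4 : x.snd = y.snd :=
      mul_right_cancel₀ (D y.fst).ne_zero (add_left_cancel h3)
    exact TrivSqZeroExt.ext h2 h4
  · intro z
    refine ⟨inl (P.symm z.fst) + inr ((z.snd - H (P.symm z.fst)) / (D (P.symm z.fst) : F)), ?_⟩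
    ext
    · simp [dnMap]
    · simp [dnMap, div_mul_cancel₀ _ (D (P.symm z.fst)).ne_zero]

end Aux

section Aux2

set_option linter.unusedSectionVars false

variable {F : Type*} [Field F] [Fintype F]

lemma exists_triple (G : DualNumber F → DualNumber F)
    (hpoly : ∃ f : Polynomial (DualNumber F), ∀ a, G a = f.eval a)
    (hbij : Function.Bijective G) :
    ∃ (P : Equiv.Perm F) (D : F → Fˣ) (H : F → F), dnMap P D H = G := by
  classical
  obtain ⟨f, hf⟩ := hpoly
  set p : F → F := fun a => (f.eval (inl a)).fst with hp'
  set d : F → F := fun a => (f.derivative.eval (inl a)).fst with hd'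
  set h : F → F := fun a => (f.eval (inl a)).snd with hh'
  have hform : ∀ x, G x = inl (p x.fst) + inr (h x.fst + x.snd * d x.fst) := by
    intro x
    rw [hf]
    exact dn_eval_eq f x
  have hd : ∀ a, d a ≠ 0 := by
    intro a h0
    have he : G (inl a) = G (inl a + inr 1) := by
      rw [hform, hform]
      ext <;> simp [h0]
    have := hbij.1 he
    have := congrArg TrivSqZeroExt.snd this
    simp at this
  have hp : Function.Bijective p := by
    rw [Finite.injective_iff_bijective.symm]
    intro a a' haa'
    have he : G (inl a + inr ((h a' - h a) / d a)) = G (inl a') := by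
      rw [hform, hform]
      ext
      · simpa using haa'
      · simp [div_mul_cancel₀ _ (hd a)]
    have := hbij.1 he
    have := congrArg TrivSqZeroExt.fst this
    simpa using this
  refine ⟨Equiv.ofBijective p hp, fun a => Units.mk0 (d a) (hd a), h, ?_⟩
  funext x
  rw [hform x]
  rfl

end Aux2

open Polynomial

/-- **Proposition (number of polynomial permutations of 𝔽_q[α]).**
The number of polynomial permutations of the ring of dual numbers over the
finite field with `q` elements equals `q! · (q-1)^q · q^q`. -/
theorem card_polyPerm_dualNumber_finField (F : Type*) [Field F] [Fintype F]
    (q : ℕ) (hq : Fintype.card F = q) :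
    Nat.card {G : DualNumber F → DualNumber F //
        (∃ f : Polynomial (DualNumber F), ∀ a, G a = f.eval a) ∧
          Function.Bijective G} =
      Nat.factorial q * (q - 1) ^ q * q ^ q := by
  classical
  subst hq
  set S := {G : DualNumber F → DualNumber F //
      (∃ f : Polynomial (DualNumber F), ∀ a, G a = f.eval a) ∧ Function.Bijective G} with hS
  let Φ : Equiv.Perm F × (F → Fˣ) × (F → F) → S := fun t =>
    ⟨dnMap t.1 t.2.1 t.2.2, dnMap_isPoly t.1 t.2.1 t.2.2, dnMap_bijective t.1 t.2.1 t.2.2⟩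
  have hΦ : Function.Bijective Φ := by
    constructor
    · rintro ⟨P, D, H⟩ ⟨P', D', H'⟩ ht
      have heq : dnMap P D H = dnMap P' D' H' := congrArg Subtype.val ht
      have h0 : ∀ a : F, dnMap P D H (inl a) = dnMap P' D' H' (inl a) := fun a =>
        congrFun heq (inl a)
      have h1 : ∀ a : F, dnMap P D H (inl a + inr 1) = dnMap P' D' H' (inl a + inr 1) :=
        fun a => congrFun heq (inl a + inr 1)
      have hP : P = P' := by
        ext a
        have := congrArg TrivSqZeroExt.fst (h0 a)
        simpa [dnMap] using this
      have hH : H = H' := by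
        funext a
        have := congrArg TrivSqZeroExt.snd (h0 a)
        simpa [dnMap] using this
      have hD : D = D' := by
        funext a
        have := congrArg TrivSqZeroExt.snd (h1 a)
        simp [dnMap, hH] at this
        exact Units.ext this
      simp [hP, hH, hD]
    · rintro ⟨G, hpoly, hbij⟩
      obtain ⟨P, D, H, hPDH⟩ := exists_triple G hpoly hbij
      exact ⟨⟨P, D, H⟩, Subtype.ext hPDH⟩
  have hcard : Nat.card S = Nat.card (Equiv.Perm F × (F → Fˣ) × (F → F)) :=
    (Nat.card_congr (Equiv.ofBijective Φ hΦ)).symm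
  rw [hcard, Nat.card_prod, Nat.card_prod, Nat.card_fun, Nat.card_fun,
    Nat.card_eq_fintype_card, Nat.card_eq_fintype_card, Nat.card_eq_fintype_card,
    Fintype.card_perm, Fintype.card_units, mul_assoc]
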